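/- Let K be a compact Hausdorff space, T a bounded operator on C(K), and suppose there exist a sequence of pairwise disjoint open sets (U_n) in K and measures (ν_n) in the unit ball of M(K) = C(K)* with |T*ν_n|(U_n) > c for all n. Then for every ε > 0 there exists a bounded operator V : c₀ → C(K) with ‖V‖ ≤ 1 such that inf_n ‖TV e_n‖ > c − 3ε, where (e_n) is the canonical basis of c₀. -/

import Mathlib

open scoped ZeroAtInfty

/-- The `n`-th canonical basis vector of `c₀ = C₀(ℕ, ℝ)`. -/
noncomputable def eSeq (n : ℕ) : C₀(ℕ, ℝ) where
  toFun := fun m => if m = n then (1 : ℝ) else 0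
  continuous_toFun := continuous_of_discreteTopology
  zero_at_infty' := by
    refine Filter.Tendsto.congr' ?_ tendsto_const_nhds
    filter_upwards [Filter.mem_cocompact.mpr ⟨{n}, isCompact_singleton, subset_rfl⟩] with m hm
    simp only [Set.mem_compl_iff, Set.mem_singleton_iff] at hm
    simp [hm]

/-- The variation of a functional `φ ∈ C(K)* = M(K)` on a set `U`:
`|φ|(U) = sup {|φ f| : ‖f‖ ≤ 1, supp f ⊆ U}` (which for open `U` is the total variation of
the representing regular Borel measure on `U`). -/
noncomputable def varOn {K : Type*} [TopologicalSpace K] [CompactSpace K]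
    (φ : C(K, ℝ) →L[ℝ] ℝ) (U : Set K) : ℝ :=
  sSup {r : ℝ | ∃ f : C(K, ℝ), ‖f‖ ≤ 1 ∧ (∀ x ∉ U, f x = 0) ∧ r = |φ f|}

lemma eSeq_apply (n m : ℕ) : eSeq n m = if m = n then (1 : ℝ) else 0 := rfl

lemma c0_apply_le_norm (a : C₀(ℕ, ℝ)) (m : ℕ) : |a m| ≤ ‖a‖ := by
  rw [← ZeroAtInftyContinuousMap.norm_toBCF_eq_norm]
  exact a.toBCF.norm_coe_le_norm m

/-- If `T` is a bounded operator on `C(K)` and there are pairwise disjoint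
open sets `(U_n)` and functionals `(ν_n)` in the unit ball of `M(K) = C(K)*` with
`|T*ν_n|(U_n) > c` for all `n`, then for every `ε > 0` there is `V : c₀ → C(K)` with
`‖V‖ ≤ 1` and `inf_n ‖T V e_n‖ > c − 3ε`. -/
theorem exists_c0_operator_of_variation_bound
    {K : Type*} [TopologicalSpace K] [CompactSpace K] [T2Space K]
    (T : C(K, ℝ) →L[ℝ] C(K, ℝ)) (c : ℝ)
    (U : ℕ → Set K) (hUopen : ∀ n, IsOpen (U n))
    (hUdisj : Pairwise (Function.onFun Disjoint U))
    (ν : ℕ → (C(K, ℝ) →L[ℝ] ℝ)) (hν : ∀ n, ‖ν n‖ ≤ 1)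
    (hvar : ∀ n, c < varOn ((ν n).comp T) (U n)) :
    ∀ ε : ℝ, 0 < ε →
      ∃ V : C₀(ℕ, ℝ) →L[ℝ] C(K, ℝ), ‖V‖ ≤ 1 ∧
        c - 3 * ε < ⨅ n : ℕ, ‖T (V (eSeq n))‖ := by
  classical
  intro ε hε
  -- choose witnesses f n
  have key : ∀ n, ∃ f : C(K, ℝ), ‖f‖ ≤ 1 ∧ (∀ x ∉ U n, f x = 0) ∧ c < ‖T f‖ := by
    intro n
    have hne : {r : ℝ | ∃ f : C(K, ℝ), ‖f‖ ≤ 1 ∧ (∀ x ∉ U n, f x = 0) ∧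
        r = |((ν n).comp T) f|}.Nonempty := ⟨0, 0, by simp, fun x _ => rfl, by simp⟩
    obtain ⟨r, ⟨f, hf1, hf2, rfl⟩, hr⟩ := exists_lt_of_lt_csSup hne (hvar n)
    refine ⟨f, hf1, hf2, lt_of_lt_of_le hr ?_⟩
    calc |((ν n).comp T) f| = ‖(ν n) (T f)‖ := rfl
      _ ≤ ‖ν n‖ * ‖T f‖ := (ν n).le_opNorm _
      _ ≤ 1 * ‖T f‖ := by
          exact mul_le_mul_of_nonneg_right (hν n) (norm_nonneg _)
      _ = ‖T f‖ := one_mul _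
  choose f hf1 hf2 hf3 using key
  -- at each point at most one f n is nonzero
  have huniq : ∀ (x : K) (m n : ℕ), m ≠ n → f m x ≠ 0 → f n x = 0 := by
    intro x m n hmn hm
    by_contra hn
    have hxm : x ∈ U m := by by_contra h; exact hm (hf2 m x h)
    have hxn : x ∈ U n := by by_contra h; exact hn (hf2 n x h)
    exact (hUdisj hmn).le_bot ⟨hxm, hxn⟩ |>.elim
  -- pointwise bound for finite sums
  have hsumbd : ∀ (b : ℕ → ℝ) (s : Finset ℕ) (B : ℝ), 0 ≤ B → (∀ n ∈ s, |b n| ≤ B) →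
      ∀ x : K, |∑ n ∈ s, b n * f n x| ≤ B := by
    intro b s B hB hb x
    by_cases h : ∃ m ∈ s, f m x ≠ 0
    · obtain ⟨m, hms, hm⟩ := h
      rw [Finset.sum_eq_single_of_mem m hms
        (fun n _ hn => by rw [huniq x m n (Ne.symm hn) hm, mul_zero])]
      calc |b m * f m x| = |b m| * |f m x| := abs_mul _ _
        _ ≤ B * 1 := by
            refine mul_le_mul (hb m hms) ?_ (abs_nonneg _) hB
            have := (ContinuousMap.norm_le (f m) (zero_le_one)).mp (hf1 m) x
            simpa using this
        _ = B := mul_one B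
    · push_neg at h
      have : ∑ n ∈ s, b n * f n x = 0 :=
        Finset.sum_eq_zero fun n hn => by rw [h n hn, mul_zero]
      rw [this]; simpa using hB
  -- summability
  have hsum : ∀ a : C₀(ℕ, ℝ), Summable fun n => a n • f n := by
    intro a
    rw [summable_iff_vanishing_norm]
    intro δ hδ
    have hzero : Filter.Tendsto a Filter.atTop (nhds 0) := by
      have := a.zero_at_infty'
      rwa [cocompact_eq_atTop (α := ℕ)] at this
    obtain ⟨N, hN⟩ := (Metric.tendsto_atTop.mp hzero) (δ / 2) (by linarith)
    refine ⟨Finset.range N, fun t ht => ?_⟩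
    have hbd : ∀ n ∈ t, |a n| ≤ δ / 2 := by
      intro n hn
      have hnN : N ≤ n := by
        by_contra h
        exact (Finset.disjoint_left.mp ht hn) (Finset.mem_range.mpr (by omega))
      have := hN n hnN
      rw [Real.dist_eq, sub_zero] at this
      exact this.le
    have : ‖∑ n ∈ t, a n • f n‖ ≤ δ / 2 := by
      rw [ContinuousMap.norm_le _ (by linarith)]
      intro x
      have : ((∑ n ∈ t, a n • f n : C(K, ℝ)) x) = ∑ n ∈ t, a n * f n x := by
        simp [ContinuousMap.coe_sum, Finset.sum_apply]
      rw [this, Real.norm_eq_abs]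
      exact hsumbd a t (δ / 2) (by linarith) hbd x
    linarith
  -- the linear map
  let Vl : C₀(ℕ, ℝ) →ₗ[ℝ] C(K, ℝ) :=
    { toFun := fun a => ∑' n, a n • f n
      map_add' := fun a b => by
        rw [← Summable.tsum_add (hsum a) (hsum b)]
        congr 1; ext n; simp [add_smul]
      map_smul' := fun r a => by
        simp only [RingHom.id_apply]
        rw [← Summable.tsum_const_smul r (hsum a)]
        congr 1; ext n; simp [smul_smul] }
  -- pointwise evaluation of Vl a
  have hVl_apply : ∀ (a : C₀(ℕ, ℝ)) (x : K), Vl a x = ∑' n, a n * f n x := by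
    intro a x
    have : Vl a x = (ContinuousMap.evalCLM ℝ x) (∑' n, a n • f n) := rfl
    rw [this, ContinuousLinearMap.map_tsum _ (hsum a)]
    rfl
  -- norm bound for Vl
  have hVlbd : ∀ a : C₀(ℕ, ℝ), ‖Vl a‖ ≤ 1 * ‖a‖ := by
    intro a
    rw [one_mul, ContinuousMap.norm_le _ (norm_nonneg a)]
    intro x
    rw [hVl_apply, Real.norm_eq_abs]
    by_cases h : ∃ m, f m x ≠ 0
    · obtain ⟨m, hm⟩ := h
      rw [tsum_eq_single m (fun n hn => by rw [huniq x m n (Ne.symm hn) hm, mul_zero])]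
      calc |a m * f m x| = |a m| * |f m x| := abs_mul _ _
        _ ≤ ‖a‖ * 1 := by
            refine mul_le_mul (c0_apply_le_norm a m) ?_ (abs_nonneg _) (norm_nonneg _)
            have := (ContinuousMap.norm_le (f m) (zero_le_one)).mp (hf1 m) x
            simpa using this
        _ = ‖a‖ := mul_one _
    · push_neg at h
      have : (fun n => a n * f n x) = fun _ => (0 : ℝ) := by
        ext n; rw [h n, mul_zero]
      rw [this, tsum_zero]
      simpa using norm_nonneg a
  let V : C₀(ℕ, ℝ) →L[ℝ] C(K, ℝ) := Vl.mkContinuous 1 hVlbd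
  have hVe : ∀ n, V (eSeq n) = f n := by
    intro n
    show ∑' m, eSeq n m • f m = f n
    rw [tsum_eq_single n (fun m hm => by simp [eSeq_apply, hm])]
    simp [eSeq_apply]
  refine ⟨V, Vl.mkContinuous_norm_le zero_le_one hVlbd, ?_⟩
  have hlb : ∀ n : ℕ, c ≤ ‖T (V (eSeq n))‖ := fun n => by rw [hVe n]; exact (hf3 n).le
  calc c - 3 * ε < c := by linarith
    _ ≤ ⨅ n : ℕ, ‖T (V (eSeq n))‖ := le_ciInf hlb
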